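/- Let 𝔣 be a finite-dimensional real simple Lie algebra whose Killing form is negative definite (i.e., 𝔣 is of compact type). Then every linear map Q : 𝔣 → 𝔣 that commutes with all adjoint operators, i.e., Q([X,Y]) = [X, Q(Y)] for all X, Y ∈ 𝔣, is a scalar multiple of the identity map: there exists c ∈ ℝ with Q = c·id. -/

import Mathlib

/-- Every linear map on a finite-dimensional real simple Lie algebra
with negative definite Killing form that commutes with all adjoint operators
is a scalar multiple of the identity. -/
theorem stmt_0 (𝔣 : Type*) [LieRing 𝔣] [LieAlgebra ℝ 𝔣] [FiniteDimensional ℝ 𝔣]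
    (hsimple : LieAlgebra.IsSimple ℝ 𝔣)
    (hneg : ∀ X : 𝔣, X ≠ 0 → killingForm ℝ 𝔣 X X < 0)
    (Q : 𝔣 →ₗ[ℝ] 𝔣) (hQ : ∀ X Y : 𝔣, Q ⁅X, Y⁆ = ⁅X, Q Y⁆) :
    ∃ c : ℝ, Q = c • (LinearMap.id : 𝔣 →ₗ[ℝ] 𝔣) := by
  classical
  have hnt : Nontrivial 𝔣 := by
    by_contra h
    rw [not_nontrivial_iff_subsingleton] at h
    exact hsimple.non_abelian ⟨fun x y => Subsingleton.elim _ _⟩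
  -- the negated Killing form is an inner ℝ product
  have hB0 : ∀ x : 𝔣, killingForm ℝ 𝔣 x x ≤ 0 := by
    intro x
    rcases eq_or_ne x 0 with rfl | hx
    · simp
    · exact (hneg x hx).le
  have hBdef : ∀ x : 𝔣, killingForm ℝ 𝔣 x x = 0 → x = 0 := by
    intro x hx
    by_contra h
    exact absurd hx (hneg x h).ne
  letI core : InnerProductSpace.Core ℝ 𝔣 :=
  { inner := fun x y => - killingForm ℝ 𝔣 x y
    conj_inner_symm := fun x y => by
      simpa using (LieModule.traceForm_comm ℝ 𝔣 𝔣 y x)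
    re_inner_nonneg := fun x => by simpa using neg_nonneg.mpr (hB0 x)
    add_left := fun x y z => by
      simp only [map_add, LinearMap.add_apply]; ring
    smul_left := fun x y r => by
      simp only [map_smul, LinearMap.smul_apply, smul_eq_mul, starRingEnd_apply, star_trivial]
      ring
    definite := fun x hx => hBdef x (by simpa [neg_eq_zero] using hx) }
  letI : NormedAddCommGroup 𝔣 := core.toNormedAddCommGroup
  letI : InnerProductSpace ℝ 𝔣 := InnerProductSpace.ofCore core.toCore
  have hip : ∀ x y : 𝔣, (inner ℝ x y : ℝ) = - killingForm ℝ 𝔣 x y := fun _ _ => rfl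
  -- key: any symmetric operator commuting with ad is scalar
  have key : ∀ S : 𝔣 →ₗ[ℝ] 𝔣, (∀ X Y : 𝔣, S ⁅X, Y⁆ = ⁅X, S Y⁆) →
      S.IsSymmetric → ∃ c : ℝ, S = c • (LinearMap.id : 𝔣 →ₗ[ℝ] 𝔣) := by
    intro S hS hsym
    obtain ⟨μ, hμ⟩ : ∃ μ : ℝ, Module.End.HasEigenvalue S μ :=
      ⟨_, hsym.hasEigenvalue_iSup_of_finiteDimensional⟩
    refine ⟨μ, ?_⟩
    let I : LieIdeal ℝ 𝔣 :=
    { toSubmodule := Module.End.eigenspace S μ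
      lie_mem := by
        intro x m hm
        have hm2 : m ∈ Module.End.eigenspace S μ := hm
        have hm' : S m = μ • m := Module.End.mem_eigenspace_iff.mp hm2
        show ⁅x, m⁆ ∈ Module.End.eigenspace S μ
        rw [Module.End.mem_eigenspace_iff, hS, hm', lie_smul] }
    have hIne : I ≠ ⊥ := by
      intro h
      exact hμ (by
        rw [Module.End.hasEigenvalue_iff] at *
        have : (I : Submodule ℝ 𝔣) = ⊥ := by rw [h]; rfl
        exact this)
    have hItop : I = ⊤ := (hsimple.eq_bot_or_eq_top I).resolve_left hIne
    ext x
    have hx : x ∈ I := hItop ▸ LieSubmodule.mem_top x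
    have hx' : S x = μ • x := Module.End.mem_eigenspace_iff.mp hx
    simpa using hx'
  -- adjoint of Q
  let Qa := LinearMap.adjoint Q
  have hQa : ∀ X Y : 𝔣, Qa ⁅X, Y⁆ = ⁅X, Qa Y⁆ := by
    intro X Y
    apply ext_inner_right ℝ
    intro z
    rw [LinearMap.adjoint_inner_left]
    rw [hip, hip, LieModule.traceForm_apply_lie_apply' ℝ 𝔣 𝔣 X (Qa Y) z]
    rw [show killingForm ℝ 𝔣 ⁅X, Y⁆ (Q z) = - killingForm ℝ 𝔣 Y ⁅X, Q z⁆ from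
      LieModule.traceForm_apply_lie_apply' ℝ 𝔣 𝔣 X Y (Q z)]
    rw [← hQ]
    have : killingForm ℝ 𝔣 Y (Q ⁅X, z⁆) = killingForm ℝ 𝔣 (Qa Y) ⁅X, z⁆ := by
      have h1 : (inner ℝ Y (Q ⁅X, z⁆) : ℝ) = inner ℝ (Qa Y) ⁅X, z⁆ :=
        (LinearMap.adjoint_inner_left Q ⁅X, z⁆ Y).symm
      rw [hip, hip] at h1
      linarith
    rw [this]
  -- symmetric and antisymmetric parts
  let S := (1 / 2 : ℝ) • (Q + Qa)
  let A := (1 / 2 : ℝ) • (Q - Qa)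
  have hQadj' : ∀ x y : 𝔣, (inner ℝ (Qa x) y : ℝ) = inner ℝ x (Q y) :=
    fun x y => LinearMap.adjoint_inner_left Q y x
  have hQadj : ∀ x y : 𝔣, (inner ℝ (Q x) y : ℝ) = inner ℝ x (Qa y) := by
    intro x y
    calc (inner ℝ (Q x) y : ℝ) = inner ℝ y (Q x) := real_inner_comm _ _
    _ = inner ℝ (Qa y) x := (LinearMap.adjoint_inner_left Q x y).symm
    _ = inner ℝ x (Qa y) := real_inner_comm _ _
  have hSsym : S.IsSymmetric := by
    intro x y
    simp only [S, LinearMap.smul_apply, LinearMap.add_apply, inner_smul_left, inner_smul_right,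
      inner_add_left, inner_add_right, RCLike.conj_to_real]
    rw [hQadj, hQadj']
    ring
  have hScomm : ∀ X Y : 𝔣, S ⁅X, Y⁆ = ⁅X, S Y⁆ := by
    intro X Y
    simp only [S, LinearMap.smul_apply, LinearMap.add_apply, hQ, hQa, lie_add, lie_smul, smul_add]
  obtain ⟨c, hc⟩ := key S hScomm hSsym
  -- antisymmetric part
  have hAskew : ∀ x y : 𝔣, (inner ℝ (A x) y : ℝ) = - inner ℝ x (A y) := by
    intro x y
    simp only [A, LinearMap.smul_apply, LinearMap.sub_apply, inner_smul_left, inner_smul_right,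
      inner_sub_left, inner_sub_right, RCLike.conj_to_real]
    rw [hQadj, hQadj']
    ring
  have hAcomm : ∀ X Y : 𝔣, A ⁅X, Y⁆ = ⁅X, A Y⁆ := by
    intro X Y
    simp only [A, LinearMap.smul_apply, LinearMap.sub_apply, hQ, hQa, lie_sub, lie_smul, smul_sub]
  have hA2comm : ∀ X Y : 𝔣, (A ∘ₗ A) ⁅X, Y⁆ = ⁅X, (A ∘ₗ A) Y⁆ := by
    intro X Y
    simp only [LinearMap.comp_apply, hAcomm]
  have hA2sym : (A ∘ₗ A).IsSymmetric := by
    intro x y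
    have h1 := hAskew (A x) y
    have h2 := hAskew x (A y)
    simp only [LinearMap.comp_apply]
    rw [h1, h2]; ring
  obtain ⟨lam, hlam⟩ := key (A ∘ₗ A) hA2comm hA2sym
  have hA2 : ∀ x : 𝔣, A (A x) = lam • x := by
    intro x
    have := congrArg (fun f : 𝔣 →ₗ[ℝ] 𝔣 => f x) hlam
    simpa using this
  -- ad (A x) = A ∘ ad x
  have hadA : ∀ x : 𝔣, LieAlgebra.ad ℝ 𝔣 (A x) = A ∘ₗ LieAlgebra.ad ℝ 𝔣 x := by
    intro x
    ext y
    simp only [LieAlgebra.ad_apply, LinearMap.comp_apply]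
    calc ⁅A x, y⁆ = -⁅y, A x⁆ := by rw [← lie_skew]
    _ = -A ⁅y, x⁆ := by rw [hAcomm]
    _ = A ⁅x, y⁆ := by rw [← lie_skew x y, map_neg]
  have hadcomm : ∀ x : 𝔣, LieAlgebra.ad ℝ 𝔣 x ∘ₗ A = A ∘ₗ LieAlgebra.ad ℝ 𝔣 x := by
    intro x
    ext y
    simp [LieAlgebra.ad_apply, hAcomm]
  -- trace identity : killingForm (A x) (A y) = lam * killingForm x y
  have htr : ∀ x y : 𝔣, killingForm ℝ 𝔣 (A x) (A y) = lam * killingForm ℝ 𝔣 x y := by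
    intro x y
    rw [killingForm_apply_apply, killingForm_apply_apply]
    have hcomp : LieAlgebra.ad ℝ 𝔣 (A x) ∘ₗ LieAlgebra.ad ℝ 𝔣 (A y)
        = lam • (LieAlgebra.ad ℝ 𝔣 x ∘ₗ LieAlgebra.ad ℝ 𝔣 y) := by
      rw [hadA, hadA]
      ext z
      simp only [LinearMap.comp_apply, LinearMap.smul_apply, LieAlgebra.ad_apply]
      calc A ⁅x, A ⁅y, z⁆⁆ = A (A ⁅x, ⁅y, z⁆⁆) := by rw [← hAcomm]
      _ = lam • ⁅x, ⁅y, z⁆⁆ := hA2 _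
    rw [hcomp, map_smul, smul_eq_mul]
  -- lam = 0
  have hskewB : ∀ x : 𝔣, killingForm ℝ 𝔣 (A x) (A x) = - lam * killingForm ℝ 𝔣 x x := by
    intro x
    have h1 : (inner ℝ (A x) (A x) : ℝ) = - inner ℝ x (A (A x)) := hAskew x (A x)
    rw [hip, hip, hA2 x] at h1
    have h2 : killingForm ℝ 𝔣 x (lam • x) = lam * killingForm ℝ 𝔣 x x := by
      rw [map_smul, smul_eq_mul]
    rw [h2] at h1
    linarith
  obtain ⟨x₀, hx₀⟩ := exists_ne (0 : 𝔣)
  have hlam0 : lam = 0 := by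
    have h1 := htr x₀ x₀
    have h2 := hskewB x₀
    have h3 : killingForm ℝ 𝔣 x₀ x₀ ≠ 0 := (hneg x₀ hx₀).ne
    have : lam * killingForm ℝ 𝔣 x₀ x₀ = - lam * killingForm ℝ 𝔣 x₀ x₀ := by
      rw [← h1, ← h2]
    rcases mul_eq_mul_right_iff.mp this with h | h
    · linarith
    · exact absurd h h3
  -- A = 0
  have hA0 : A = 0 := by
    ext x
    simp only [LinearMap.zero_apply]
    by_contra hax
    have := htr x x
    rw [hlam0, zero_mul] at this
    exact absurd this (hneg (A x) hax).ne
  -- conclude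
  refine ⟨c, ?_⟩
  have hQSA : Q = S + A := by
    simp only [S, A]
    ext x
    simp only [LinearMap.add_apply, LinearMap.smul_apply, LinearMap.sub_apply]
    module
  rw [hQSA, hA0, add_zero, hc]
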